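/- (Permutation importance in an additive model.) Suppose f is additive, f(x) = Σ_{k=1}^p f_k(x_k), with each f_k measurable and f_k(X_k) square-integrable, and Y = f(X) + ε with ε independent of (X, X'_j), E[ε] = 0, Var(ε) = σ² ∈ (0,∞). Then the permutation importance of X_j equals twice the variance of its additive component: I(X_j) = 2 · Var(f_j(X_j)). -/

import Mathlib

open MeasureTheory ProbabilityTheory

/-- Permutation importance in an additive model: if `f(x) = Σₖ fₖ(xₖ)` then
`I(Xⱼ) = 2 · Var(fⱼ(Xⱼ))`. -/
theorem permutation_importance_additive
    {Ω : Type*} [MeasurableSpace Ω] (P : Measure Ω) [IsProbabilityMeasure P]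
    {p : ℕ} (j : Fin p) (X : Ω → (Fin p → ℝ)) (X' : Ω → ℝ) (ε : Ω → ℝ) (Y : Ω → ℝ)
    (f : (Fin p → ℝ) → ℝ) (fk : Fin p → ℝ → ℝ) (σ2 : ℝ)
    (hX : Measurable X) (hX' : Measurable X') (hε : Measurable ε) (hf : Measurable f)
    (hfk : ∀ k, Measurable (fk k))
    (hadd : ∀ x : Fin p → ℝ, f x = ∑ k, fk k (x k))
    (hL2k : ∀ k, MemLp (fun ω => fk k (X ω k)) 2 P)
    (hident : IdentDistrib X' (fun ω => X ω j) P P)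
    (hXindep : IndepFun X' X P)
    (hY : ∀ ω, Y ω = f (X ω) + ε ω)
    (hεindep : IndepFun ε (fun ω => (X ω, X' ω)) P)
    (hεmean : ∫ ω, ε ω ∂P = 0)
    (hεvar : variance ε P = σ2) (hσ2 : 0 < σ2) :
    (∫ ω, (Y ω - f (Function.update (X ω) j (X' ω))) ^ 2 ∂P)
      - (∫ ω, (Y ω - f (X ω)) ^ 2 ∂P)
      = 2 * variance (fun ω => fk j (X ω j)) P := by
  set g : Ω → ℝ := fun ω => fk j (X ω j) with hgdef
  set g' : Ω → ℝ := fun ω => fk j (X' ω) with hg'def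
  have hg2 : MemLp g 2 P := hL2k j
  have hgg' : IdentDistrib g' g P P := hident.comp (hfk j)
  have hg'2 : MemLp g' 2 P := hgg'.symm.memLp_snd hg2
  have hε2 : MemLp ε 2 P := by
    by_contra h
    have ht := ProbabilityTheory.evariance_eq_top hε.aestronglyMeasurable h
    rw [variance, ht] at hεvar
    simp at hεvar
    exact absurd hεvar.symm (ne_of_gt hσ2)
  -- pointwise identity for the updated vector
  have hupd : ∀ ω, f (Function.update (X ω) j (X' ω)) = f (X ω) - g ω + g' ω := by
    intro ω
    rw [hadd, hadd]
    rw [← Finset.sum_erase_add _ _ (Finset.mem_univ j),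
        ← Finset.sum_erase_add _ _ (Finset.mem_univ j)]
    have hsum : ∑ k ∈ Finset.univ.erase j, fk k (Function.update (X ω) j (X' ω) k)
        = ∑ k ∈ Finset.univ.erase j, fk k (X ω k) := by
      refine Finset.sum_congr rfl fun k hk => ?_
      rw [Function.update_of_ne (Finset.ne_of_mem_erase hk)]
    rw [hsum, Function.update_self]
    simp only [hgdef, hg'def]
    ring
  set D : Ω → ℝ := fun ω => g ω - g' ω with hDdef
  have hD2 : MemLp D 2 P := hg2.sub hg'2
  have hεD2 : MemLp (fun ω => ε ω + D ω) 2 P := hε2.add hD2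
  -- rewrite the two integrands
  have h1 : ∀ ω, Y ω - f (Function.update (X ω) j (X' ω)) = ε ω + D ω := by
    intro ω; rw [hY, hupd]; simp [hDdef]; ring
  have h2 : ∀ ω, Y ω - f (X ω) = ε ω := by intro ω; rw [hY]; ring
  -- integrability facts
  have hIεD : Integrable (fun ω => (ε ω + D ω) ^ 2) P := hεD2.integrable_sq
  have hIε : Integrable (fun ω => ε ω ^ 2) P := hε2.integrable_sq
  have hID : Integrable (fun ω => D ω ^ 2) P := hD2.integrable_sq
  have hIprod : Integrable (fun ω => ε ω * D ω) P := by
    have : (fun ω => ε ω * D ω)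
        = fun ω => (((ε ω + D ω) ^ 2 - ε ω ^ 2) - D ω ^ 2) / 2 := by
      funext ω; ring
    rw [this]
    exact ((hIεD.sub hIε).sub hID).div_const 2
  -- independence of ε and D
  have hDmeas : Measurable D :=
    ((hfk j).comp ((measurable_pi_apply j).comp hX)).sub ((hfk j).comp hX')
  have hεDindep : IndepFun ε D P := by
    have : D = (fun q : (Fin p → ℝ) × ℝ => fk j (q.1 j) - fk j q.2)
        ∘ (fun ω => (X ω, X' ω)) := rfl
    rw [this]
    exact hεindep.comp measurable_id
      (((hfk j).comp ((measurable_pi_apply j).comp measurable_fst)).sub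
        ((hfk j).comp measurable_snd))
  have hεDzero : ∫ ω, ε ω * D ω ∂P = 0 := by
    rw [show (fun ω => ε ω * D ω) = ε * D from rfl,
      hεDindep.integral_mul_eq_mul_integral hε.aestronglyMeasurable hDmeas.aestronglyMeasurable, hεmean,
      zero_mul]
  -- independence of g' and g
  have hg'g : IndepFun g' g P :=
    hXindep.comp (hfk j) ((hfk j).comp (measurable_pi_apply j))
  have hgmeas : Measurable g := (hfk j).comp ((measurable_pi_apply j).comp hX)
  have hg'meas : Measurable g' := (hfk j).comp hX'
  have hgg'int : ∫ ω, g' ω * g ω ∂P = (∫ ω, g ω ∂P) * (∫ ω, g ω ∂P) := by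
    rw [show (fun ω => g' ω * g ω) = g' * g from rfl,
      hg'g.integral_mul_eq_mul_integral hg'meas.aestronglyMeasurable hgmeas.aestronglyMeasurable,
      hgg'.integral_eq]
  have hIg : Integrable (fun ω => g ω ^ 2) P := hg2.integrable_sq
  have hIg' : Integrable (fun ω => g' ω ^ 2) P := hg'2.integrable_sq
  have hIgg' : Integrable (fun ω => g' ω * g ω) P := by
    have : (fun ω => g' ω * g ω)
        = fun ω => ((g ω ^ 2 + g' ω ^ 2) - D ω ^ 2) / 2 := by
      funext ω; simp only [hDdef]; ring
    rw [this]
    exact ((hIg.add hIg').sub hID).div_const 2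
  have hg'sq : ∫ ω, g' ω ^ 2 ∂P = ∫ ω, g ω ^ 2 ∂P :=
    (hgg'.comp (measurable_id.pow_const 2)).integral_eq
  -- compute ∫ D²
  have hDsq : ∫ ω, D ω ^ 2 ∂P
      = 2 * ((∫ ω, g ω ^ 2 ∂P) - (∫ ω, g ω ∂P) ^ 2) := by
    have hptw : (fun ω => D ω ^ 2)
        = fun ω => g ω ^ 2 + g' ω ^ 2 - 2 * (g' ω * g ω) := by
      funext ω; simp only [hDdef]; ring
    have hIsum : Integrable (fun ω => g ω ^ 2 + g' ω ^ 2) P := hIg.add hIg'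
    have hI2 : Integrable (fun ω => 2 * (g' ω * g ω)) P := hIgg'.const_mul 2
    rw [hptw, integral_sub hIsum hI2, integral_add hIg hIg',
      integral_const_mul 2 _, hgg'int, hg'sq]
    ring
  -- main computation
  have hLHSptw : (fun ω => (Y ω - f (Function.update (X ω) j (X' ω))) ^ 2)
      = fun ω => ε ω ^ 2 + 2 * (ε ω * D ω) + D ω ^ 2 := by
    funext ω; rw [h1]; ring
  have hRHSptw : (fun ω => (Y ω - f (X ω)) ^ 2) = fun ω => ε ω ^ 2 := by
    funext ω; rw [h2]
  have hI2p : Integrable (fun ω => 2 * (ε ω * D ω)) P := hIprod.const_mul 2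
  have hIa : Integrable (fun ω => ε ω ^ 2 + 2 * (ε ω * D ω)) P := hIε.add hI2p
  rw [hLHSptw, hRHSptw,
    integral_add hIa hID,
    integral_add hIε hI2p, integral_const_mul 2 _, hεDzero, hDsq,
    variance_eq_sub hg2]
  simp only [Pi.pow_apply]
  ring
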